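/- arXiv:0912.3115 — 3 statements merged into one kernel-verified Lean document; each statement's English description precedes it below -/
import Mathlib

section
/- Let p be a prime, let 𝐤 be a perfect field of characteristic p, and let A be a local Artinian ring with maximal ideal m together with a ring isomorphism ρ from the residue field A/m to 𝐤. Then there exists a local ring homomorphism i : W(𝐤) → A from the ring of p-typical Witt vectors of 𝐤 such that the map induced on residue fields is the identity; concretely, for every Witt vector x ∈ W(𝐤) one has ρ(i(x) mod m) = x₀, where x₀ denotes the zeroth Witt coefficient of x (the image of x under the ring homomorphism W(𝐤) → 𝐤 given by truncation to length one). -/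
open IsLocalRing WittVector Finset

/-- Lemma 4.3: a local Artinian ring with perfect residue field `𝐤` of characteristic `p`
receives a local homomorphism from the ring of `p`-typical Witt vectors of `𝐤` inducing
the identity on residue fields. -/
theorem stmt1 (p : ℕ) [Fact p.Prime] {k : Type*} [Field k] [CharP k p] [PerfectRing k p]
    {A : Type*} [CommRing A] [IsLocalRing A] [IsArtinianRing A]
    (ρ : IsLocalRing.ResidueField A ≃+* k) :
    ∃ i : WittVector p k →+* A, IsLocalHom i ∧
      ∀ x : WittVector p k, ρ (IsLocalRing.residue A (i x)) = x.coeff 0 := by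
  classical
  have hp := (Fact.out : p.Prime)
  -- the residue map to k
  set r : A →+* k := (ρ : ResidueField A →+* k).comp (IsLocalRing.residue A) with hr_def
  have hr_surj : Function.Surjective r :=
    ρ.surjective.comp (IsLocalRing.residue_surjective)
  have hr_zero : ∀ a : A, r a = 0 ↔ a ∈ maximalIdeal A := by
    intro a
    rw [hr_def, RingHom.comp_apply, ← IsLocalRing.residue_eq_zero_iff]
    exact ⟨fun h => ρ.injective (by simpa using h), fun h => by simp [h]⟩
  -- nilpotency of the maximal ideal
  obtain ⟨N0, hN0⟩ := IsArtinianRing.isNilpotent_jacobson_bot (R := A)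
  rw [IsLocalRing.jacobson_eq_maximalIdeal (⊥ : Ideal A) bot_ne_top] at hN0
  set N : ℕ := N0 + 1 with hN
  have hmN : (maximalIdeal A) ^ N ≤ ⊥ := by
    calc (maximalIdeal A) ^ N ≤ (maximalIdeal A) ^ N0 :=
          Ideal.pow_le_pow_right (by omega)
      _ = ⊥ := hN0
  -- p lies in the maximal ideal
  have hpA : (p : A) ∈ maximalIdeal A := by
    rw [← hr_zero]
    simp [map_natCast]
  have hpN : (p : A) ^ N = 0 := by
    have : (p : A) ^ N ∈ (maximalIdeal A) ^ N := Ideal.pow_mem_pow hpA N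
    simpa using hmN this
  set n : ℕ := 2 * N with hn
  -- the n-th ghost component kills the kernel of `map r`
  have hker : RingHom.ker (WittVector.map (p := p) r) ≤
      RingHom.ker (WittVector.ghostComponent (p := p) n) := by
    intro y hy
    have hy' : ∀ j, y.coeff j ∈ maximalIdeal A := by
      intro j
      rw [← hr_zero]
      have : (WittVector.map r y).coeff j = r (y.coeff j) := WittVector.map_coeff r y j
      rw [RingHom.mem_ker] at hy
      rw [← this, hy, WittVector.zero_coeff]
    rw [RingHom.mem_ker, WittVector.ghostComponent_apply, aeval_wittPolynomial]
    apply Finset.sum_eq_zero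
    intro i hi
    rcases le_or_gt N i with h | h
    · have : (p : A) ^ i = 0 := by
        calc (p : A) ^ i = (p : A) ^ N * (p : A) ^ (i - N) := by
              rw [← pow_add]; congr 1; omega
          _ = 0 := by rw [hpN, zero_mul]
      rw [this, zero_mul]
    · have hle : N ≤ p ^ (n - i) := by
        have h1 : N ≤ n - i := by omega
        have h2 : n - i < p ^ (n - i) := Nat.lt_pow_self hp.one_lt
        omega
      have : y.coeff i ^ p ^ (n - i) ∈ (maximalIdeal A) ^ N := by
        apply Ideal.pow_le_pow_right hle
        exact Ideal.pow_mem_pow (hy' i) _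
      have : y.coeff i ^ p ^ (n - i) = 0 := by simpa using hmN this
      rw [this, mul_zero]
  -- a set-theoretic section of `map r`
  set s : WittVector p k → WittVector p A :=
    fun x => WittVector.mk p (fun j => Function.surjInv hr_surj (x.coeff j)) with hs_def
  have hs : Function.RightInverse s (WittVector.map (p := p) r) := by
    intro x
    ext j
    rw [WittVector.map_coeff]
    show r (Function.surjInv hr_surj (x.coeff j)) = x.coeff j
    exact Function.surjInv_eq hr_surj _
  -- the induced map W(k) → A
  set i₀ : WittVector p k →+* A :=
    (WittVector.map (p := p) r).liftOfRightInverse s hs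
      ⟨WittVector.ghostComponent (p := p) n, hker⟩ with hi₀
  have hkey : ∀ y : WittVector p A, i₀ (WittVector.map r y) = WittVector.ghostComponent n y := by
    intro y
    exact (WittVector.map (p := p) r).liftOfRightInverse_comp_apply s hs
      ⟨WittVector.ghostComponent (p := p) n, hker⟩ y
  -- twist by the inverse of the n-th power of Frobenius
  set σ : k →+* k := ((iterateFrobeniusEquiv k p n).symm : k →+* k) with hσ
  have hσ_pow : ∀ a : k, σ a ^ p ^ n = a := by
    intro a
    have := (iterateFrobeniusEquiv k p n).apply_symm_apply a
    rwa [iterateFrobeniusEquiv_def] at this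
  set i : WittVector p k →+* A := i₀.comp (WittVector.map (p := p) σ) with hi
  -- the main computation
  have hmain : ∀ x : WittVector p k, ρ (IsLocalRing.residue A (i x)) = x.coeff 0 := by
    intro x
    show r (i x) = x.coeff 0
    have h1 : i x = WittVector.ghostComponent n (s (WittVector.map σ x)) := by
      rw [hi, RingHom.comp_apply, ← hs (WittVector.map σ x), hkey, hs]
    rw [h1, WittVector.ghostComponent_apply, aeval_wittPolynomial, map_sum]
    have h2 : ∀ j, r ((s (WittVector.map σ x)).coeff j) = (WittVector.map σ x).coeff j := by
      intro j
      have := congrArg (fun y => WittVector.coeff y j) (hs (WittVector.map σ x))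
      simpa [WittVector.map_coeff] using this
    rw [Finset.sum_eq_single_of_mem 0 (Finset.mem_range.mpr (by omega))]
    · rw [map_mul, map_pow, map_pow, map_natCast, pow_zero, one_mul, h2,
        WittVector.map_coeff, Nat.sub_zero]
      exact hσ_pow _
    · intro b _ hb
      rw [map_mul, map_pow, map_natCast, CharP.cast_eq_zero k p, zero_pow hb, zero_mul]
  refine ⟨i, ?_, hmain⟩
  constructor
  intro x hx
  by_contra hxu
  have hx0 : x.coeff 0 = 0 := by
    by_contra h0
    exact hxu (WittVector.isUnit_of_coeff_zero_ne_zero x h0)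
  have : r (i x) = 0 := by
    show ρ (IsLocalRing.residue A (i x)) = 0
    rw [hmain x, hx0]
  have hm : i x ∈ maximalIdeal A := (hr_zero _).mp this
  exact hm hx
end

section
/- Let A be a local Artinian ring with maximal ideal m, and let f be a nonzero element of the ring A((t)) of formal Laurent series over A. Then f is a unit of A((t)) if and only if there exists an integer w such that the coefficient of t^w in f is a unit of A and the coefficient of t^i in f lies in m for every i < w. -/
open HahnSeries

/-- Coefficients of a product lie in the product ideal. -/
lemma coeff_mul_mem {A : Type*} [CommRing A] {I J : Ideal A}
    (x y : LaurentSeries A) (hx : ∀ a, x.coeff a ∈ I) (hy : ∀ a, y.coeff a ∈ J) :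
    ∀ a, (x * y).coeff a ∈ I * J := by
  intro a
  rw [HahnSeries.coeff_mul]
  exact Ideal.sum_mem _ fun ij _ => Ideal.mul_mem_mul (hx ij.1) (hy ij.2)

lemma coeff_pow_mem {A : Type*} [CommRing A] {I : Ideal A}
    (x : LaurentSeries A) (hx : ∀ a, x.coeff a ∈ I) (n : ℕ) :
    ∀ a, (x ^ n).coeff a ∈ I ^ n := by
  induction n with
  | zero => simp
  | succ n ih =>
      intro a
      rw [pow_succ, pow_succ]
      exact coeff_mul_mem _ _ ih hx a

lemma order_eq_of {A : Type*} [CommRing A] {x : LaurentSeries A} {w : ℤ}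
    (h0 : ∀ i < w, x.coeff i = 0) (hw : x.coeff w ≠ 0) : x.order = w := by
  have hx : x ≠ 0 := fun h => hw (by simp [h])
  refine le_antisymm (HahnSeries.order_le_of_coeff_ne_zero hw) ?_
  by_contra h
  exact (mt HahnSeries.coeff_order_eq_zero.1 hx) (h0 _ (lt_of_not_ge h))

/-- A Laurent series whose leading coefficient is a unit is a unit. -/
lemma isUnit_of_coeff_order {A : Type*} [CommRing A] {x : LaurentSeries A}
    (hx : x ≠ 0) (h : IsUnit (x.coeff x.order)) : IsUnit x := by
  clear hx
  rw [← LaurentSeries.single_order_mul_powerSeriesPart x]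
  apply IsUnit.mul
  · exact IsUnit.of_mul_eq_one (single (-x.order) 1) (by
      rw [HahnSeries.single_mul_single, add_neg_cancel, one_mul]; rfl)
  · refine IsUnit.map (HahnSeries.ofPowerSeries ℤ A) ?_
    rw [PowerSeries.isUnit_iff_constantCoeff, ← PowerSeries.coeff_zero_eq_constantCoeff_apply,
      LaurentSeries.powerSeriesPart_coeff]
    simpa using h

/-- Characterization of the units of the ring of formal Laurent series over a local
Artinian ring: a nonzero `f` is a unit if and only if there is an integer `w` such that
the coefficient of `t^w` is a unit and all coefficients of lower index lie in the maximal
ideal (Definition 4.6 of the paper). -/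
theorem stmt4 {A : Type*} [CommRing A] [IsLocalRing A] [IsArtinianRing A]
    (f : LaurentSeries A) (hf : f ≠ 0) :
    IsUnit f ↔ ∃ w : ℤ, IsUnit (f.coeff w) ∧
      ∀ i : ℤ, i < w → f.coeff i ∈ IsLocalRing.maximalIdeal A := by
  constructor
  · rintro ⟨u, hu⟩
    have hfu : f * (↑u⁻¹ : LaurentSeries A) = 1 := by
      rw [← hu]; exact u.mul_inv
    -- some coefficient is not in the maximal ideal
    have hexists : ∃ i : ℤ, f.coeff i ∉ IsLocalRing.maximalIdeal A := by
      by_contra h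
      push_neg at h
      have h1 : (f * (↑u⁻¹ : LaurentSeries A)).coeff 0 ∈ IsLocalRing.maximalIdeal A := by
        rw [HahnSeries.coeff_mul]
        exact Ideal.sum_mem _ fun ij _ => Ideal.mul_mem_right _ _ (h ij.1)
      rw [hfu] at h1
      simp only [HahnSeries.coeff_one, if_pos rfl] at h1
      exact (IsLocalRing.maximalIdeal.isMaximal A).ne_top
        (Ideal.eq_top_of_isUnit_mem _ h1 isUnit_one)
    obtain ⟨i0, hi0⟩ := hexists
    have hi0' : f.order ≤ i0 :=
      HahnSeries.order_le_of_coeff_ne_zero fun h => hi0 (h ▸ (IsLocalRing.maximalIdeal A).zero_mem)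
    set P : ℕ → Prop := fun n =>
      f.coeff (f.order + n) ∉ IsLocalRing.maximalIdeal A with hP
    have hPe : ∃ n, P n := ⟨(i0 - f.order).toNat, by
      simpa [hP, Int.toNat_of_nonneg (sub_nonneg.2 hi0')] using hi0⟩
    classical
    refine ⟨f.order + Nat.find hPe, ?_, ?_⟩
    · by_contra hnot
      exact Nat.find_spec hPe (IsLocalRing.mem_maximalIdeal _ |>.2 hnot)
    · intro i hi
      by_cases hlt : i < f.order
      · rw [HahnSeries.coeff_eq_zero_of_lt_order hlt]
        exact (IsLocalRing.maximalIdeal A).zero_mem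
      · push_neg at hlt
        have hi' : i = f.order + (i - f.order).toNat := by
          rw [Int.toNat_of_nonneg (sub_nonneg.2 hlt)]; ring
        have hless : (i - f.order).toNat < Nat.find hPe := by omega
        have h2 : ¬ P ((i - f.order).toNat) := Nat.find_min hPe hless
        rw [hi']
        exact not_not.1 h2
  · rintro ⟨w, hw, hmem⟩
    -- split f = g + h
    set o := f.order with ho
    set h := ∑ i ∈ Finset.Ico o w, single i (f.coeff i) with hh
    have hcoeff : ∀ a : ℤ, h.coeff a = if a ∈ Finset.Ico o w then f.coeff a else 0 := by
      intro a
      rw [hh, show (∑ i ∈ Finset.Ico o w, single i (f.coeff i)).coeff a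
        = ∑ i ∈ Finset.Ico o w, (single i (f.coeff i)).coeff a from
        map_sum (HahnSeries.coeff.addMonoidHom a) _ _]
      by_cases ha : a ∈ Finset.Ico o w
      · rw [if_pos ha, Finset.sum_eq_single a
          (fun b _ hb => by rw [HahnSeries.coeff_single, if_neg (Ne.symm hb)])
          (fun hna => absurd ha hna)]
        exact HahnSeries.coeff_single_same a _
      · rw [if_neg ha]
        exact Finset.sum_eq_zero fun b hb => by
          rw [HahnSeries.coeff_single, if_neg (fun hab => ha (by rw [hab]; exact hb))]
    set g := f - h with hg
    have hgcoeff : ∀ a : ℤ, g.coeff a = if a < w then 0 else f.coeff a := by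
      intro a
      rw [hg, HahnSeries.coeff_sub, hcoeff]
      by_cases haw : a < w
      · rw [if_pos haw]
        by_cases hao : o ≤ a
        · rw [if_pos (Finset.mem_Ico.2 ⟨hao, haw⟩), sub_self]
        · rw [if_neg (fun hmem' => hao (Finset.mem_Ico.1 hmem').1),
            HahnSeries.coeff_eq_zero_of_lt_order (lt_of_not_ge hao), sub_zero]
      · rw [if_neg haw, if_neg (fun hmem' => haw (Finset.mem_Ico.1 hmem').2), sub_zero]
    have hgw : g.coeff w = f.coeff w := by rw [hgcoeff]; simp
    have hgwne : g.coeff w ≠ 0 := by rw [hgw]; exact hw.ne_zero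
    have hgne : g ≠ 0 := fun h0 => hgwne (by simp [h0])
    have hgorder : g.order = w :=
      order_eq_of (fun i hi => by rw [hgcoeff, if_pos hi]) hgwne
    have hgunit : IsUnit g := isUnit_of_coeff_order hgne (by rw [hgorder, hgw]; exact hw)
    -- h is nilpotent
    have hhm : ∀ a, h.coeff a ∈ IsLocalRing.maximalIdeal A := by
      intro a
      rw [hcoeff]
      by_cases ha : a ∈ Finset.Ico o w
      · rw [if_pos ha]; exact hmem a (Finset.mem_Ico.1 ha).2
      · rw [if_neg ha]; exact (IsLocalRing.maximalIdeal A).zero_mem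
    obtain ⟨n, hn⟩ : IsNilpotent (IsLocalRing.maximalIdeal A) := by
      rw [← IsLocalRing.jacobson_eq_maximalIdeal (⊥ : Ideal A) bot_ne_top]
      exact IsArtinianRing.isNilpotent_jacobson_bot
    have hhnil : IsNilpotent h := by
      refine ⟨n, ?_⟩
      ext a
      have := coeff_pow_mem h hhm n a
      rw [hn] at this
      simpa using this
    have hfgh : f = g + h := by rw [hg]; ring
    rw [hfgh]
    exact hhnil.isUnit_add_left_of_commute hgunit (Commute.all _ _)
end

section
/- Let A be a local Artinian ring with maximal ideal m. Then every unit f of the Laurent series ring A((t)) can be written in the form f = a₀ · t^w · u · h, where w ∈ ℤ, a₀ ∈ A^×, u ∈ A[[t]] is a power series with constant coefficient 1, and h = 1 + Σ_{i=1}^{N} cᵢ t^{-i} for some N ≥ 0 and elements c₁, …, c_N ∈ m; moreover the data (w, a₀, u, h) is uniquely determined by f, and conversely every product of this form is a unit of A((t)). The integer w is called the winding number w(f) of f. -/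
/-- The Laurent series `a₀ · t^w · u · h`, where `u ∈ A[[t]]` and
`h = 1 + Σᵢ cᵢ t^{-(i+1)}` is a polynomial in `t⁻¹` with constant coefficient `1`
recorded by the finitely supported function `c`. -/
noncomputable def unitForm {A : Type*} [CommRing A] (w : ℤ) (a0 : Aˣ)
    (u : PowerSeries A) (c : ℕ →₀ A) : LaurentSeries A :=
  HahnSeries.single w (a0 : A) * (HahnSeries.ofPowerSeries ℤ A u) *
    (1 + c.sum fun i ci => HahnSeries.single (-((i : ℤ) + 1)) ci)

namespace Stmt5Aux

variable {A : Type*} [CommRing A]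

lemma coeff_finsetSum {ι : Type*} (s : Finset ι) (f : ι → LaurentSeries A) (n : ℤ) :
    (∑ i ∈ s, f i).coeff n = ∑ i ∈ s, (f i).coeff n :=
  map_sum (HahnSeries.coeff.addMonoidHom n) f s

lemma coeff_mul_mem {I J : Ideal A} {x y : LaurentSeries A}
    (hx : ∀ i, x.coeff i ∈ I) (hy : ∀ i, y.coeff i ∈ J) (n : ℤ) :
    (x * y).coeff n ∈ I * J := by
  rw [HahnSeries.coeff_mul]
  exact Ideal.sum_mem _ fun ij _ => Ideal.mul_mem_mul (hx _) (hy _)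

lemma coeff_mul_mem_right {I : Ideal A} {x y : LaurentSeries A}
    (hy : ∀ i, y.coeff i ∈ I) (n : ℤ) : (x * y).coeff n ∈ I := by
  rw [HahnSeries.coeff_mul]
  exact Ideal.sum_mem _ fun ij _ => Ideal.mul_mem_left _ _ (hy _)

lemma coeff_pow_mem {I : Ideal A} {x : LaurentSeries A}
    (hx : ∀ i, x.coeff i ∈ I) (k : ℕ) : ∀ n, (x ^ k).coeff n ∈ I ^ k := by
  induction k with
  | zero => intro n; simp [Ideal.one_eq_top]
  | succ k ih =>
      intro n
      rw [pow_succ, pow_succ]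
      exact coeff_mul_mem ih hx n

/-- Supported in negative degrees. -/
def NegSupp (x : LaurentSeries A) : Prop := ∀ i : ℤ, 0 ≤ i → x.coeff i = 0

lemma NegSupp.add {x y : LaurentSeries A} (hx : NegSupp x) (hy : NegSupp y) :
    NegSupp (x + y) := fun i hi => by
  rw [HahnSeries.coeff_add, hx i hi, hy i hi, add_zero]

lemma NegSupp.mul {x y : LaurentSeries A} (hx : NegSupp x) (hy : NegSupp y) :
    NegSupp (x * y) := by
  intro n hn
  rw [HahnSeries.coeff_mul]
  refine Finset.sum_eq_zero fun ij hij => ?_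
  rw [Finset.mem_addAntidiagonal] at hij
  obtain ⟨-, -, hsum⟩ := hij
  by_cases h1 : 0 ≤ ij.1
  · rw [hx _ h1, zero_mul]
  · by_cases h2 : 0 ≤ ij.2
    · rw [hy _ h2, mul_zero]
    · exfalso; omega

noncomputable def negSeries (c : ℕ →₀ A) : LaurentSeries A :=
  c.sum fun i ci => HahnSeries.single (-((i : ℤ) + 1)) ci

lemma negSeries_coeff (c : ℕ →₀ A) (n : ℤ) :
    (negSeries c).coeff n = if n < 0 then c (-(n + 1)).toNat else 0 := by
  rw [negSeries, Finsupp.sum, coeff_finsetSum]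
  split_ifs with hn
  · rw [Finset.sum_congr rfl (fun i _ => ?_), Finset.sum_ite_eq' c.support _ (fun i => c i)]
    · split_ifs with h
      · rfl
      · exact (Finsupp.notMem_support_iff.1 h).symm
    · rw [HahnSeries.coeff_single]
      by_cases h : n = -((i : ℤ) + 1)
      · rw [if_pos h, if_pos (by omega)]
      · rw [if_neg h, if_neg (by omega)]
  · refine Finset.sum_eq_zero fun i _ => ?_
    exact HahnSeries.coeff_single_of_ne (by omega)

lemma negSeries_negSupp (c : ℕ →₀ A) : NegSupp (negSeries c) := by
  intro i hi
  rw [negSeries_coeff, if_neg (by omega)]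

lemma negSeries_mem {I : Ideal A} {c : ℕ →₀ A} (hc : ∀ i, c i ∈ I) :
    ∀ n, (negSeries c).coeff n ∈ I := by
  intro n
  rw [negSeries_coeff]
  split_ifs
  · exact hc _
  · exact zero_mem _

lemma negSeries_inj {c c' : ℕ →₀ A} (h : negSeries c = negSeries c') : c = c' := by
  ext i
  have h2 := congrArg (fun z : LaurentSeries A => z.coeff (-(i : ℤ) - 1)) h
  simp only [negSeries_coeff] at h2
  rw [if_pos (by omega), if_pos (by omega)] at h2
  have h3 : (-(-(i : ℤ) - 1 + 1)).toNat = i := by omega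
  rwa [h3] at h2

lemma finite_negIdx (x : LaurentSeries A) : {n : ℕ | x.coeff (-(n : ℤ) - 1) ≠ 0}.Finite := by
  by_cases hx : x = 0
  · simp [hx]
  · apply Set.Finite.subset (Set.finite_Iio (-x.order).toNat)
    intro n hn
    simp only [Set.mem_setOf_eq] at hn
    have h1 : ¬(-(n : ℤ) - 1 < x.order) := fun h => hn (HahnSeries.coeff_eq_zero_of_lt_order h)
    simp only [Set.mem_Iio]
    omega

noncomputable def negCoeffs (x : LaurentSeries A) : ℕ →₀ A :=
  ⟨(finite_negIdx x).toFinset, fun n => x.coeff (-(n : ℤ) - 1), by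
    intro n; rw [Set.Finite.mem_toFinset]; exact Iff.rfl⟩

@[simp] lemma negCoeffs_apply (x : LaurentSeries A) (n : ℕ) :
    negCoeffs x n = x.coeff (-(n : ℤ) - 1) := rfl

lemma negSeries_negCoeffs {x : LaurentSeries A} (hx : NegSupp x) :
    negSeries (negCoeffs x) = x := by
  ext n
  rw [negSeries_coeff]
  split_ifs with hn
  · rw [negCoeffs_apply]
    congr 1
    omega
  · exact (hx n (not_lt.1 hn)).symm

lemma ofPS_coeff (u : PowerSeries A) (n : ℤ) :
    (HahnSeries.ofPowerSeries ℤ A u).coeff n =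
      if n < 0 then 0 else PowerSeries.coeff n.natAbs u := by
  exact PowerSeries.coeff_coe u n

lemma ps_coeff_mul_mem_left {I : Ideal A} {u v : PowerSeries A}
    (hu : ∀ k, PowerSeries.coeff k u ∈ I) (n : ℕ) : PowerSeries.coeff n (u * v) ∈ I := by
  rw [PowerSeries.coeff_mul]
  exact Ideal.sum_mem _ fun p _ => Ideal.mul_mem_right _ _ (hu _)



section LocalRing

variable [IsLocalRing A]

local notation "mA" => IsLocalRing.maximalIdeal A

lemma unit_of_one_add_mem {a : A} (ha : a ∈ mA) : IsUnit (1 + a) := by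
  by_contra h
  have h1 : (1 + a) ∈ mA := by
    rwa [IsLocalRing.mem_maximalIdeal, mem_nonunits_iff]
  have h2 : (1 : A) ∈ mA := by
    have := sub_mem h1 ha
    simpa using this
  exact (IsLocalRing.maximalIdeal.isMaximal A).ne_top (Ideal.eq_top_of_isUnit_mem _ h2 isUnit_one)

lemma unit_not_mem {a : A} (ha : IsUnit a) : a ∉ mA := fun h =>
  (IsLocalRing.maximalIdeal.isMaximal A).ne_top (Ideal.eq_top_of_isUnit_mem _ h ha)

variable [IsArtinianRing A]

lemma exists_kappa : ∃ κ : ℕ, 1 ≤ κ ∧ mA ^ κ = ⊥ := by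
  obtain ⟨k, hk⟩ := IsArtinianRing.isNilpotent_jacobson_bot (R := A)
  rw [IsLocalRing.jacobson_eq_maximalIdeal (⊥ : Ideal A) bot_ne_top] at hk
  exact ⟨k + 1, le_add_self, by rw [pow_succ, hk]; exact Ideal.bot_mul _⟩

lemma isNil_of_coeff_mem {x : LaurentSeries A} (hx : ∀ i, x.coeff i ∈ mA) :
    IsNilpotent x := by
  obtain ⟨κ, -, hκ⟩ := exists_kappa (A := A)
  refine ⟨κ, ?_⟩
  ext n
  have := coeff_pow_mem hx κ n
  rwa [hκ, Ideal.mem_bot] at this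


lemma key (κ : ℕ) (hκ : mA ^ κ = ⊥) :
    ∀ s j : ℕ, j + s = κ → 1 ≤ j → ∀ e : LaurentSeries A, (∀ i, e.coeff i ∈ mA ^ j) →
    ∃ (u : PowerSeries A) (nn : LaurentSeries A),
      (∀ k, PowerSeries.coeff k u ∈ mA ^ j) ∧ NegSupp nn ∧ (∀ i, nn.coeff i ∈ mA ^ j) ∧
      1 + e = (HahnSeries.ofPowerSeries ℤ A) (1 + u) * (1 + nn) := by
  intro s
  induction s with
  | zero =>
      intro j hj _ e he
      have he0 : e = 0 := by
        ext n
        have := he n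
        rw [Nat.add_zero] at hj
        rwa [hj, hκ, Ideal.mem_bot] at this
      exact ⟨0, 0, fun k => by simp, fun i _ => rfl, fun i => by simp, by simp [he0]⟩
  | succ s ih =>
      intro j hj hj1 e he
      set mke : PowerSeries A := PowerSeries.mk fun k => e.coeff k with hmke
      set E : LaurentSeries A := HahnSeries.ofPowerSeries ℤ A mke with hE
      have hEc : ∀ i, E.coeff i ∈ mA ^ j := by
        intro i
        rw [hE, ofPS_coeff]
        split_ifs
        · exact zero_mem _
        · rw [hmke, PowerSeries.coeff_mk]; exact he _
      set N : LaurentSeries A := e - E with hN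
      have hNs : NegSupp N := by
        intro i hi
        rw [hN, HahnSeries.coeff_sub, hE, ofPS_coeff, if_neg (not_lt.2 hi), hmke,
          PowerSeries.coeff_mk, Int.natAbs_of_nonneg hi, sub_self]
      have hNc : ∀ i, N.coeff i ∈ mA ^ j := by
        intro i
        rw [hN, HahnSeries.coeff_sub]
        exact sub_mem (he i) (hEc i)
      have hNm : ∀ i, N.coeff i ∈ mA := fun i => Ideal.pow_le_self (by omega) (hNc i)
      have hU1 : IsUnit ((1 : LaurentSeries A) + N) := (isNil_of_coeff_mem hNm).isUnit_one_add
      have hU2 : IsUnit ((1 : LaurentSeries A) + E) := by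
        rw [hE, ← map_one (HahnSeries.ofPowerSeries ℤ A), ← map_add]
        refine IsUnit.map _ ?_
        rw [PowerSeries.isUnit_iff_constantCoeff, map_add, map_one]
        have h0 : PowerSeries.constantCoeff mke = e.coeff 0 := by
          rw [hmke, ← PowerSeries.coeff_zero_eq_constantCoeff_apply, PowerSeries.coeff_mk]
          norm_num
        rw [h0]
        exact unit_of_one_add_mem (Ideal.pow_le_self (by omega) (he 0))
      obtain ⟨V, hV⟩ := (hU1.mul hU2).exists_right_inv
      set r : LaurentSeries A := N * E with hr
      have hrc : ∀ i, r.coeff i ∈ mA ^ (j + 1) := by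
        intro i
        have h2 : mA ^ j * mA ^ j ≤ mA ^ (j + 1) := by
          rw [← pow_add]; exact Ideal.pow_le_pow_right (by omega)
        exact h2 (coeff_mul_mem hNc hEc i)
      set δ : LaurentSeries A := -(V * r) with hδ
      have hδc : ∀ i, δ.coeff i ∈ mA ^ (j + 1) := by
        intro i
        rw [hδ, HahnSeries.coeff_neg]
        exact neg_mem (coeff_mul_mem_right hrc i)
      have hprod : ((1 : LaurentSeries A) + N) * (1 + E) = 1 + e + r := by
        have hNE : N + E = e := sub_add_cancel e E
        calc (1 + N) * (1 + E) = 1 + (N + E) + N * E := by ring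
          _ = 1 + e + r := by rw [hNE, hr]
      have heq : (1 : LaurentSeries A) + e = (1 + N) * (1 + E) * (1 + δ) := by
        have h1 : (1 + N) * (1 + E) * (1 + δ)
            = (1 + e + r) + -(((1 + N) * (1 + E) * V) * r) := by
          rw [← hprod]; rw [hδ]; ring
        rw [h1, hV, one_mul]; ring
      obtain ⟨u', n', hu', hn's, hn'c, hfac⟩ := ih (j + 1) (by omega) (by omega) δ hδc
      have hple : mA ^ (j + 1) ≤ mA ^ j := Ideal.pow_le_pow_right (by omega)
      refine ⟨mke + u' + mke * u', N + n' + N * n', ?_, ?_, ?_, ?_⟩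
      · intro k
        refine add_mem (add_mem ?_ (hple (hu' k))) ?_
        · exact he _
        · exact ps_coeff_mul_mem_left (fun k => he _) k
      · exact (hNs.add hn's).add (hNs.mul hn's)
      · intro i
        rw [HahnSeries.coeff_add, HahnSeries.coeff_add]
        exact add_mem (add_mem (hNc i) (hple (hn'c i)))
          (coeff_mul_mem_right (fun i => hple (hn'c i)) i)
      · have hE1 : (1 : LaurentSeries A) + E = HahnSeries.ofPowerSeries ℤ A (1 + mke) := by
          rw [map_add, map_one, hE]
        rw [heq, hfac, hE1,
          show (1 : PowerSeries A) + (mke + u' + mke * u') = (1 + mke) * (1 + u') by ring,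
          map_mul,
          show (1 : LaurentSeries A) + (N + n' + N * n') = (1 + N) * (1 + n') by ring]
        ring


lemma rep_unique {P Q : PowerSeries A} (hQ : IsUnit Q)
    {n n' : LaurentSeries A} (hns : NegSupp n) (hn's : NegSupp n')
    (hnm : ∀ i, n.coeff i ∈ mA)
    (heq : HahnSeries.ofPowerSeries ℤ A P * (1 + n)
      = HahnSeries.ofPowerSeries ℤ A Q * (1 + n')) :
    P = Q ∧ n = n' := by
  set R : PowerSeries A := ↑hQ.unit⁻¹ with hR
  have hQR : Q * R = 1 := by
    have h := hQ.unit.mul_inv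
    rw [hQ.unit_spec] at h
    exact h
  set d : PowerSeries A := P * R - 1 with hd
  have h1 : HahnSeries.ofPowerSeries ℤ A (P * R) * (1 + n) = 1 + n' := by
    calc HahnSeries.ofPowerSeries ℤ A (P * R) * (1 + n)
        = (HahnSeries.ofPowerSeries ℤ A P * (1 + n)) * HahnSeries.ofPowerSeries ℤ A R := by
          rw [map_mul]; ring
      _ = (HahnSeries.ofPowerSeries ℤ A Q * HahnSeries.ofPowerSeries ℤ A R) * (1 + n') := by
          rw [heq]; ring
      _ = 1 + n' := by rw [← map_mul, hQR, map_one, one_mul]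
  have hstar : HahnSeries.ofPowerSeries ℤ A d + (HahnSeries.ofPowerSeries ℤ A d) * n
      = n' - n := by
    have h2 : HahnSeries.ofPowerSeries ℤ A d
        = HahnSeries.ofPowerSeries ℤ A (P * R) - 1 := by rw [hd, map_sub, map_one]
    rw [h2]
    linear_combination h1
  have hdmem : ∀ j : ℕ, ∀ k : ℤ, (HahnSeries.ofPowerSeries ℤ A d).coeff k ∈ mA ^ j := by
    intro j
    induction j with
    | zero => intro k; simp [Ideal.one_eq_top]
    | succ j ihj =>
        intro k
        by_cases hk : k < 0
        · rw [ofPS_coeff, if_pos hk]; exact zero_mem _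
        · have h3 := congrArg (fun z : LaurentSeries A => z.coeff k) hstar
          simp only [HahnSeries.coeff_add, HahnSeries.coeff_sub] at h3
          rw [hns k (not_lt.1 hk), hn's k (not_lt.1 hk), sub_zero] at h3
          have h4 : (HahnSeries.ofPowerSeries ℤ A d).coeff k
              = -((HahnSeries.ofPowerSeries ℤ A d * n).coeff k) :=
            eq_neg_of_add_eq_zero_left h3
          rw [h4, pow_succ]
          exact neg_mem (coeff_mul_mem ihj hnm k)
  obtain ⟨κ, -, hκ⟩ := exists_kappa (A := A)
  have hd0 : HahnSeries.ofPowerSeries ℤ A d = 0 := by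
    ext k
    have := hdmem κ k
    rwa [hκ, Ideal.mem_bot] at this
  have hdz : d = 0 := HahnSeries.ofPowerSeries_injective (by rw [hd0, map_zero])
  have hPR : P * R = 1 := by
    have := hdz
    rw [hd, sub_eq_zero] at this
    exact this
  have hPQ : P = Q := by
    calc P = P * (R * Q) := by rw [mul_comm R Q, hQR, mul_one]
      _ = (P * R) * Q := by ring
      _ = Q := by rw [hPR, one_mul]
  have hnn : n = n' := by
    rw [hd0] at hstar
    simp only [zero_add, zero_mul, add_zero] at hstar
    exact (sub_eq_zero.mp hstar.symm).symm
  exact ⟨hPQ, hnn⟩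


lemma unitForm_def (w : ℤ) (a0 : Aˣ) (u : PowerSeries A) (c : ℕ →₀ A) :
    unitForm w a0 u c = HahnSeries.single w (a0 : A) *
      (HahnSeries.ofPowerSeries ℤ A u) * (1 + negSeries c) := rfl

lemma unitForm_coeff (w : ℤ) (a0 : Aˣ) (u : PowerSeries A) (c : ℕ →₀ A)
    (hu : PowerSeries.constantCoeff u = 1) (hc : ∀ i, c i ∈ mA) :
    IsUnit ((unitForm w a0 u c).coeff w) ∧
      ∀ i, i < w → (unitForm w a0 u c).coeff i ∈ mA := by
  have hμ : ∀ n : ℤ, (HahnSeries.ofPowerSeries ℤ A u * negSeries c).coeff n ∈ mA :=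
    fun n => coeff_mul_mem_right (negSeries_mem hc) n
  have hcoeff : ∀ n : ℤ, (unitForm w a0 u c).coeff (n + w)
      = (↑a0 : A) * ((HahnSeries.ofPowerSeries ℤ A u).coeff n
        + (HahnSeries.ofPowerSeries ℤ A u * negSeries c).coeff n) := by
    intro n
    rw [unitForm_def, mul_assoc, HahnSeries.coeff_single_mul_add, mul_add, mul_one,
      HahnSeries.coeff_add]
  constructor
  · have h0 := hcoeff 0
    rw [zero_add] at h0
    rw [h0, ofPS_coeff, if_neg (by omega)]
    have h1 : PowerSeries.coeff (0 : ℤ).natAbs u = 1 := by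
      rw [show ((0:ℤ).natAbs) = 0 from rfl, PowerSeries.coeff_zero_eq_constantCoeff, hu]
    rw [h1]
    exact a0.isUnit.mul (unit_of_one_add_mem (hμ 0))
  · intro i hi
    have h1 := hcoeff (i - w)
    rw [sub_add_cancel] at h1
    rw [h1, ofPS_coeff, if_pos (by omega), zero_add]
    exact Ideal.mul_mem_left _ _ (hμ _)

lemma unitForm_eq_aux (w : ℤ) (a0 : Aˣ) (u : PowerSeries A) (c : ℕ →₀ A) :
    unitForm w a0 u c = HahnSeries.single w (1 : A) *
      (HahnSeries.ofPowerSeries ℤ A (PowerSeries.C (↑a0 : A) * u) * (1 + negSeries c)) := by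
  rw [unitForm_def, map_mul, HahnSeries.ofPowerSeries_C]
  have h1 : (HahnSeries.C ((↑a0 : A)) : LaurentSeries A) = HahnSeries.single 0 (↑a0 : A) := rfl
  have h2 : HahnSeries.single w (1 : A) * HahnSeries.single 0 ((↑a0 : A))
      = HahnSeries.single w ((↑a0 : A)) := by
    rw [HahnSeries.single_mul_single, add_zero, one_mul]
  rw [h1, ← h2]
  ring

lemma single_cancel (w : ℤ) {z z' : LaurentSeries A}
    (h : HahnSeries.single w (1 : A) * z = HahnSeries.single w (1 : A) * z') : z = z' := by
  have h2 := congrArg (fun y => HahnSeries.single (-w) (1 : A) * y) h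
  simp only [← mul_assoc, HahnSeries.single_mul_single, one_mul] at h2
  rw [neg_add_cancel, HahnSeries.single_zero_one, one_mul, one_mul] at h2
  exact h2

lemma rep_eq {w₁ w₂ : ℤ} {a₁ a₂ : Aˣ} {u₁ u₂ : PowerSeries A} {c₁ c₂ : ℕ →₀ A}
    (hu₁ : PowerSeries.constantCoeff u₁ = 1) (hc₁ : ∀ i, c₁ i ∈ mA)
    (hu₂ : PowerSeries.constantCoeff u₂ = 1) (hc₂ : ∀ i, c₂ i ∈ mA)
    (heq : unitForm w₁ a₁ u₁ c₁ = unitForm w₂ a₂ u₂ c₂) :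
    w₁ = w₂ ∧ a₁ = a₂ ∧ u₁ = u₂ ∧ c₁ = c₂ := by
  have W1 := unitForm_coeff w₁ a₁ u₁ c₁ hu₁ hc₁
  have W2 := unitForm_coeff w₂ a₂ u₂ c₂ hu₂ hc₂
  have hw : w₁ = w₂ := by
    rcases lt_trichotomy w₁ w₂ with h | h | h
    · exfalso
      have hU := W1.1
      have hM := W2.2 w₁ h
      rw [heq] at hU
      exact unit_not_mem hU hM
    · exact h
    · exfalso
      have hU := W2.1
      have hM := W1.2 w₂ h
      rw [← heq] at hU
      exact unit_not_mem hU hM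
  subst hw
  rw [unitForm_eq_aux, unitForm_eq_aux] at heq
  have heq2 := single_cancel w₁ heq
  have hQunit : IsUnit (PowerSeries.C ((↑a₂ : A)) * u₂) := by
    rw [PowerSeries.isUnit_iff_constantCoeff, map_mul, PowerSeries.constantCoeff_C, hu₂, mul_one]
    exact a₂.isUnit
  obtain ⟨hPQ, hnn⟩ := rep_unique hQunit (negSeries_negSupp c₁) (negSeries_negSupp c₂)
      (negSeries_mem hc₁) heq2
  have hcc : c₁ = c₂ := negSeries_inj hnn
  have ha : a₁ = a₂ := by
    have h5 := congrArg (PowerSeries.constantCoeff) hPQ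
    rw [map_mul, map_mul, PowerSeries.constantCoeff_C, PowerSeries.constantCoeff_C,
      hu₁, hu₂, mul_one, mul_one] at h5
    exact Units.ext h5
  have hu : u₁ = u₂ := by
    have h3 := congrArg (fun z => PowerSeries.C ((↑a₁⁻¹ : A)) * z) hPQ
    rw [← ha] at h3
    rw [← mul_assoc, ← mul_assoc, ← map_mul, Units.inv_mul, map_one, one_mul, one_mul] at h3
    exact h3
  exact ⟨rfl, ha, hu, hcc⟩


lemma exists_rep (f : LaurentSeries A) (hf : IsUnit f) :
    ∃ (w : ℤ) (a0 : Aˣ) (u : PowerSeries A) (c : ℕ →₀ A),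
      PowerSeries.constantCoeff u = 1 ∧ (∀ i, c i ∈ mA) ∧ f = unitForm w a0 u c := by
  have hex : ∃ i, IsUnit (f.coeff i) := by
    by_contra hno
    push_neg at hno
    have hm : ∀ i, f.coeff i ∈ mA := fun i => (IsLocalRing.mem_maximalIdeal _).2 (hno i)
    obtain ⟨k, hk⟩ := isNil_of_coeff_mem hm
    have h1 : IsUnit (f ^ k) := hf.pow k
    rw [hk] at h1
    exact not_isUnit_zero h1
  set T : Set ℤ := f.support ∩ {i | IsUnit (f.coeff i)} with hT
  have hTwf : T.IsWF := f.isWF_support.mono Set.inter_subset_left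
  have hTne : T.Nonempty := by
    obtain ⟨i, hi⟩ := hex
    exact ⟨i, ⟨hi.ne_zero, hi⟩⟩
  set w := hTwf.min hTne with hwdef
  have hwT : w ∈ T := hTwf.min_mem hTne
  have hw : IsUnit (f.coeff w) := hwT.2
  have hlt : ∀ i, i < w → f.coeff i ∈ mA := by
    intro i hi
    by_cases h : IsUnit (f.coeff i)
    · exact absurd (hTwf.min_le hTne ⟨h.ne_zero, h⟩) (not_le.2 hi)
    · exact (IsLocalRing.mem_maximalIdeal _).2 h
  set a := hw.unit with hadef
  set g := HahnSeries.single (-w) ((↑a⁻¹ : A)) * f with hg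
  have hgc : ∀ n : ℤ, g.coeff n = (↑a⁻¹ : A) * f.coeff (n + w) := by
    intro n
    conv_lhs => rw [hg, show n = (n + w) + -w from by ring]
    rw [HahnSeries.coeff_single_mul_add]
  have hg0 : g.coeff 0 = 1 := by
    rw [hgc 0, zero_add, ← hw.unit_spec]
    exact Units.inv_mul _
  have hgm : ∀ n : ℤ, n < 0 → g.coeff n ∈ mA := fun n hn => by
    rw [hgc]
    exact Ideal.mul_mem_left _ _ (hlt _ (by omega))
  set G := PowerSeries.mk fun k => g.coeff k with hGdef
  set oG := HahnSeries.ofPowerSeries ℤ A G with hoG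
  have hGc : PowerSeries.constantCoeff G = 1 := by
    rw [← PowerSeries.coeff_zero_eq_constantCoeff_apply, hGdef, PowerSeries.coeff_mk]
    simpa using hg0
  set N0 := g - oG with hN0
  have hN0s : NegSupp N0 := by
    intro i hi
    rw [hN0, HahnSeries.coeff_sub, hoG, ofPS_coeff, if_neg (not_lt.2 hi), hGdef,
      PowerSeries.coeff_mk, Int.natAbs_of_nonneg hi, sub_self]
  have hN0m : ∀ i, N0.coeff i ∈ mA := by
    intro i
    by_cases hi : i < 0
    · rw [hN0, HahnSeries.coeff_sub, hoG, ofPS_coeff, if_pos hi, sub_zero]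
      exact hgm i hi
    · rw [hN0s i (not_lt.1 hi)]
      exact zero_mem _
  have hGu : IsUnit G := by
    rw [PowerSeries.isUnit_iff_constantCoeff, hGc]
    exact isUnit_one
  have hoGu : IsUnit oG := hGu.map _
  obtain ⟨Vg, hVg⟩ := hoGu.exists_right_inv
  set ε := Vg * N0 with hε
  have hεm : ∀ i, ε.coeff i ∈ mA := fun i => coeff_mul_mem_right hN0m i
  obtain ⟨κ, hκ1, hκ⟩ := exists_kappa (A := A)
  obtain ⟨u', n', hu'm, hn's, hn'm, hfac⟩ := key κ hκ (κ - 1) 1 (by omega) le_rfl ε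
    (by intro i; rw [pow_one]; exact hεm i)
  have hgfac : g = oG * (HahnSeries.ofPowerSeries ℤ A (1 + u')) * (1 + n') := by
    have h1 : g = oG * (1 + ε) := by
      have h2 : oG * (1 + ε) = oG + (oG * Vg) * N0 := by rw [hε]; ring
      rw [h2, hVg, one_mul, hN0]
      ring
    rw [h1, hfac, ← mul_assoc]
  set U := G * (1 + u') with hU
  have hUc : PowerSeries.constantCoeff U = 1 + PowerSeries.constantCoeff u' := by
    rw [hU, map_mul, hGc, one_mul, map_add, map_one]
  have hu'0 : PowerSeries.constantCoeff u' ∈ mA := by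
    have h3 := hu'm 0
    rwa [pow_one, PowerSeries.coeff_zero_eq_constantCoeff_apply] at h3
  have hb : IsUnit (PowerSeries.constantCoeff U) := by
    rw [hUc]
    exact unit_of_one_add_mem hu'0
  set b := hb.unit with hbdef
  refine ⟨w, a * b, PowerSeries.C ((↑b⁻¹ : A)) * U, negCoeffs n', ?_, ?_, ?_⟩
  · rw [map_mul, PowerSeries.constantCoeff_C, ← hb.unit_spec]
    exact Units.inv_mul _
  · intro i
    rw [negCoeffs_apply]
    have h4 := hn'm (-(i : ℤ) - 1)
    rwa [pow_one] at h4
  · rw [unitForm_def, negSeries_negCoeffs hn's]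
    have hfg : f = HahnSeries.single w ((↑a : A)) * g := by
      rw [hg, ← mul_assoc, HahnSeries.single_mul_single, add_neg_cancel, Units.mul_inv,
        HahnSeries.single_zero_one, one_mul]
    have hmain : HahnSeries.single w ((↑(a * b) : A)) *
        HahnSeries.ofPowerSeries ℤ A (PowerSeries.C ((↑b⁻¹ : A)) * U)
        = HahnSeries.single w ((↑a : A)) * (oG * HahnSeries.ofPowerSeries ℤ A (1 + u')) := by
      rw [hoG, ← map_mul, ← hU]
      have h6 : HahnSeries.single w ((↑(a * b) : A))
          = HahnSeries.single w ((↑a : A)) * HahnSeries.single 0 ((↑b : A)) := by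
        rw [HahnSeries.single_mul_single, add_zero, Units.val_mul]
      rw [h6, map_mul, HahnSeries.ofPowerSeries_C]
      have h7 : (HahnSeries.C ((↑b⁻¹ : A)) : LaurentSeries A)
          = HahnSeries.single 0 ((↑b⁻¹ : A)) := rfl
      rw [h7, mul_assoc, ← mul_assoc (HahnSeries.single 0 ((↑b : A))),
        HahnSeries.single_mul_single, add_zero, Units.mul_inv, HahnSeries.single_zero_one,
        one_mul]
    rw [hfg, hgfac, hmain]
    ring

end LocalRing
end Stmt5Aux

/-- Definition 4.6 of the paper: over a local Artinian ring `A`, every unit of `A((t))`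
factors uniquely as `a₀ · t^w · u · h` with `w ∈ ℤ`, `a₀ ∈ A^×`, `u ∈ A[[t]]` with
constant coefficient `1`, and `h = 1 + Σ_{i=1}^{N} cᵢ t^{-i}` with all `cᵢ` in the
maximal ideal; conversely, every such product is a unit of `A((t))`. The integer `w` is
the winding number of the unit. -/
theorem stmt5 {A : Type*} [CommRing A] [IsLocalRing A] [IsArtinianRing A] :
    (∀ f : LaurentSeries A, IsUnit f →
      ∃! q : ℤ × Aˣ × PowerSeries A × (ℕ →₀ A),
        (PowerSeries.constantCoeff q.2.2.1 = 1 ∧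
          ∀ i, q.2.2.2 i ∈ IsLocalRing.maximalIdeal A) ∧
        f = unitForm q.1 q.2.1 q.2.2.1 q.2.2.2) ∧
    (∀ (w : ℤ) (a0 : Aˣ) (u : PowerSeries A) (c : ℕ →₀ A),
      PowerSeries.constantCoeff u = 1 →
      (∀ i, c i ∈ IsLocalRing.maximalIdeal A) →
      IsUnit (unitForm w a0 u c)) := by
  constructor
  · intro f hf
    obtain ⟨w, a0, u, c, hu, hc, hrep⟩ := Stmt5Aux.exists_rep f hf
    refine ⟨(w, a0, u, c), ⟨⟨hu, hc⟩, hrep⟩, ?_⟩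
    rintro ⟨w', a', u', c'⟩ ⟨⟨hu', hc'⟩, hrep'⟩
    obtain ⟨h1, h2, h3, h4⟩ := Stmt5Aux.rep_eq hu' hc' hu hc (hrep'.symm.trans hrep)
    rw [Prod.mk.injEq, Prod.mk.injEq, Prod.mk.injEq]
    exact ⟨h1, h2, h3, h4⟩
  · intro w a0 u c hu hc
    rw [Stmt5Aux.unitForm_def]
    refine (IsUnit.mul (IsUnit.mul ?_ ?_) ?_)
    · exact IsUnit.of_mul_eq_one (HahnSeries.single (-w) ((↑a0⁻¹ : A)))
        (by rw [HahnSeries.single_mul_single, add_neg_cancel, Units.mul_inv,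
          HahnSeries.single_zero_one])
    · exact IsUnit.map _
        (by rw [PowerSeries.isUnit_iff_constantCoeff, hu]; exact isUnit_one)
    · exact (Stmt5Aux.isNil_of_coeff_mem (Stmt5Aux.negSeries_mem hc)).isUnit_one_add
end
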